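/- For every u ∈ WI₁ and every v ∈ WI₂, the map u⋄v obtained from the Schröder–Cantor–Bernstein construction is a wavelet induced map, i.e., a measurable bijection of [0,1) admitting a measurable partition {A_k}_{k∈ℤ} of [1/2,1) and a measurable partition {B_k}_{k∈ℤ} of [0,1/2) on which it equals frac(2^k x) and frac(2^k(x−1)) respectively. -/

import Mathlib

open MeasureTheory Set Real Filter
open scoped symmDiff Classical

noncomputable section

/-- The Littlewood–Paley set `E = [-2π,-π) ∪ [π,2π)`. -/
def E : Set ℝ := Ico (-(2*π)) (-π) ∪ Ico π (2*π)

/-- `tau x = x + 2jπ`, where `j` is the unique integer with `x + 2jπ ∈ E`. -/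
def tau (x : ℝ) : ℝ :=
  if x - 2*π*(⌊x/(2*π)⌋ : ℝ) < π then x - 2*π*(⌊x/(2*π)⌋ : ℝ) - 2*π
  else x - 2*π*(⌊x/(2*π)⌋ : ℝ)

/-- `delta x = 2^k x`, where (for `x ≠ 0`) `k` is the unique integer with `2^k x ∈ E`. -/
def delta (x : ℝ) : ℝ :=
  if 0 < x then (2:ℝ)^(⌈Real.logb 2 (π/x)⌉) * x
  else (2:ℝ)^(⌊Real.logb 2 (2*π/(-x))⌋) * x

/-- The map `ξ : E → [0,1)`. -/
def xiMap (x : ℝ) : ℝ := if x < 0 then x/(2*π) + 1 else x/(2*π)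

/-- The inverse `ξ⁻¹ : [0,1) → E`. -/
def xiInv (y : ℝ) : ℝ := if y < 1/2 then 2*π*(y-1) else 2*π*y

/-- The translates `{W + 2kπ}_{k ∈ ℤ}` form a partition of `ℝ`. -/
def TransPartition (W : Set ℝ) : Prop :=
  (⋃ k : ℤ, (fun x : ℝ => x + 2*π*(k:ℝ)) '' W) = univ ∧
  Pairwise fun k l : ℤ =>
    Disjoint ((fun x : ℝ => x + 2*π*(k:ℝ)) '' W) ((fun x : ℝ => x + 2*π*(l:ℝ)) '' W)

/-- The dilates `{2^k W}_{k ∈ ℤ}` form a partition of `ℝ \ {0}`. -/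
def DilPartition (W : Set ℝ) : Prop :=
  (⋃ k : ℤ, (fun x : ℝ => (2:ℝ)^k * x) '' W) = {(0:ℝ)}ᶜ ∧
  Pairwise fun k l : ℤ =>
    Disjoint ((fun x : ℝ => (2:ℝ)^k * x) '' W) ((fun x : ℝ => (2:ℝ)^l * x) '' W)

/-- A regularized wavelet set. -/
def IsRegularizedWaveletSet (W : Set ℝ) : Prop :=
  MeasurableSet W ∧ TransPartition W ∧ DilPartition W

/-- The wavelet induced isomorphism `h̃_W = ξ ∘ τ|_W ∘ (δ|_W)⁻¹ ∘ ξ⁻¹` of `[0,1)`. -/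
def hIso (W : Set ℝ) : ℝ → ℝ :=
  fun t => xiMap (tau (Function.invFunOn delta W (xiInv t)))

/-- The class of wavelet induced maps of `[0,1)` (Proposition 2.3 (i)-(ii)). -/
def IsWaveletInduced (h : ℝ → ℝ) : Prop :=
  Set.BijOn h (Ico (0:ℝ) 1) (Ico (0:ℝ) 1) ∧
  Measurable ((Ico (0:ℝ) 1).restrict h) ∧
  ∃ A B : ℤ → Set ℝ,
    (∀ k, MeasurableSet (A k)) ∧ (∀ k, MeasurableSet (B k)) ∧
    (⋃ k, A k) = Ico (1/2 : ℝ) 1 ∧ Pairwise (Function.onFun Disjoint A) ∧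
    (⋃ k, B k) = Ico (0:ℝ) (1/2) ∧ Pairwise (Function.onFun Disjoint B) ∧
    (∀ k, ∀ x ∈ A k, h x = Int.fract ((2:ℝ)^k * x)) ∧
    (∀ k, ∀ x ∈ B k, h x = Int.fract ((2:ℝ)^k * (x - 1)))

/-- The class `WI₁`. -/
def MemWI1 (f : ℝ → ℝ) : Prop :=
  ∃ A B : ℕ → Set ℝ,
    (∀ k, MeasurableSet (A k)) ∧ (∀ k, MeasurableSet (B k)) ∧
    (⋃ k, A k) = Ico (1/2 : ℝ) 1 ∧ Pairwise (Function.onFun Disjoint A) ∧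
    (⋃ k, B k) = Ico (0:ℝ) (1/2) ∧ Pairwise (Function.onFun Disjoint B) ∧
    (∀ k, ∀ x ∈ A k, f x = x / 2^(k+1)) ∧
    (∀ k, ∀ x ∈ B k, f x = (x - 1) / 2^(k+1) + 1)

/-- The class `WI₂`. -/
def MemWI2 (g : ℝ → ℝ) : Prop :=
  Measurable ((Ico (0:ℝ) 1).restrict g) ∧
  Set.MapsTo g (Ico (0:ℝ) 1) (Ico (0:ℝ) 1) ∧
  Set.InjOn g (Ico (0:ℝ) 1) ∧
  ∀ x ∈ Ico (0:ℝ) 1, ∃ k l : ℕ, g x = (x + l) / 2^k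

/-- The Schröder–Cantor–Bernstein map `u ⋄ v` for injections between arbitrary types. -/
def scb {α β : Type*} (u : α → β) (v : β → α) : α → β :=
  fun x =>
    if x ∈ ⋃ k : ℕ, (v ∘ u)^[k] '' (Set.range v)ᶜ then u x
    else if h2 : x ∈ Set.range v then Classical.choose h2
    else u x

/-- The Schröder–Cantor–Bernstein map `u ⋄ v` for maps of `[0,1)`. -/
def scbOn (u v : ℝ → ℝ) : ℝ → ℝ :=
  fun x =>
    if x ∈ ⋃ k : ℕ, (v ∘ u)^[k] '' (Ico (0:ℝ) 1 \ v '' (Ico (0:ℝ) 1)) then u x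
    else Function.invFunOn v (Ico (0:ℝ) 1) x

/-- The metric `d` on wavelet sets. -/
def dws (W₁ W₂ : Set ℝ) : ℝ :=
  Real.sqrt (volume (W₁ ∆ W₂)).toReal + Real.sqrt (∫ x in W₁ ∆ W₂, |x|⁻¹)

/-- The measure `ν` on `[0,1)` with density `(1-x)⁻¹` on `[0,1/2)` and `x⁻¹` on `[1/2,1)`. -/
def nuMeasure : Measure ℝ :=
  volume.withDensity (fun x =>
    ENNReal.ofReal (if x ∈ Ico (0:ℝ) (1/2) then (1-x)⁻¹
      else if x ∈ Ico (1/2:ℝ) 1 then x⁻¹ else 0))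


lemma meas_restrict_of_cover {ι : Type} [Countable ι] {s : Set ℝ} {f : ℝ → ℝ}
    (P : ι → Set ℝ) (hcov : ∀ x ∈ s, ∃ i, x ∈ P i)
    (hPm : ∀ i, MeasurableSet (P i))
    (F : ι → ℝ → ℝ) (hF : ∀ i, Measurable (F i))
    (heq : ∀ i, ∀ x ∈ P i, f x = F i x) :
    Measurable (s.restrict f) := by
  intro t ht
  have hset : (s.restrict f) ⁻¹' t =
      ⋃ i, (Subtype.val ⁻¹' (P i)) ∩ ((fun x : s => F i (x : ℝ)) ⁻¹' t) := by
    ext x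
    simp only [Set.mem_preimage, Set.mem_iUnion, Set.mem_inter_iff, Set.restrict_apply]
    constructor
    · intro hx
      obtain ⟨i, hi⟩ := hcov x x.2
      exact ⟨i, hi, by rwa [← heq i x hi]⟩
    · rintro ⟨i, hi, hFi⟩
      show f x ∈ t
      rwa [heq i x hi]
  rw [hset]
  exact MeasurableSet.iUnion fun i =>
    (measurable_subtype_coe (hPm i)).inter (((hF i).comp measurable_subtype_coe) ht)

lemma image_meas {f : ℝ → ℝ} (hm : Measurable ((Ico (0:ℝ) 1).restrict f))
    (hinj : Set.InjOn f (Ico (0:ℝ) 1)) {T : Set ℝ} (hT : MeasurableSet T)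
    (hTI : T ⊆ Ico (0:ℝ) 1) : MeasurableSet (f '' T) := by
  have hsb : StandardBorelSpace (Ico (0:ℝ) 1) := (measurableSet_Ico).standardBorel
  have hinj' : Function.Injective ((Ico (0:ℝ) 1).restrict f) := fun a b hab =>
    Subtype.ext (hinj a.2 b.2 hab)
  have hemb := hm.measurableEmbedding hinj'
  have himg : f '' T = (Ico (0:ℝ) 1).restrict f '' (Subtype.val ⁻¹' T) := by
    show f '' T = (f ∘ Subtype.val) '' (Subtype.val ⁻¹' T)
    rw [Set.image_comp, Subtype.image_preimage_coe,
      Set.inter_eq_self_of_subset_right hTI]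
  rw [himg]
  exact hemb.measurableSet_image' (measurable_subtype_coe hT)

/-- For every `u ∈ WI₁` and `v ∈ WI₂`, the Schröder–Cantor–Bernstein map
`u ⋄ v` is a wavelet induced map. -/
theorem scb_isWaveletInduced (u v : ℝ → ℝ) (hu : MemWI1 u) (hv : MemWI2 v) :
    IsWaveletInduced (scbOn u v) := by
  obtain ⟨A, B, hAm, hBm, hAU, hAd, hBU, hBd, hAf, hBf⟩ := hu
  obtain ⟨hvm, hvmap, hvinj, hvform⟩ := hv
  have hAsub : ∀ k, A k ⊆ Ico (1/2:ℝ) 1 := fun k => hAU ▸ subset_iUnion A k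
  have hBsub : ∀ k, B k ⊆ Ico (0:ℝ) (1/2) := fun k => hBU ▸ subset_iUnion B k
  have hsplit : Ico (0:ℝ) (1/2) ∪ Ico (1/2:ℝ) 1 = Ico (0:ℝ) 1 :=
    Ico_union_Ico_eq_Ico (by norm_num) (by norm_num)
  have hA_I : ∀ k, A k ⊆ Ico (0:ℝ) 1 := fun k x hx => by
    have := hAsub k hx; exact ⟨by linarith [this.1], this.2⟩
  have hB_I : ∀ k, B k ⊆ Ico (0:ℝ) 1 := fun k x hx => by
    have := hBsub k hx; exact ⟨this.1, by linarith [this.2]⟩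
  have hpow : ∀ k : ℕ, (1:ℝ) ≤ 2^(k+1) := fun k => one_le_pow₀ (by norm_num)
  have hpow2 : ∀ k : ℕ, (2:ℝ) ≤ 2^(k+1) := fun k => by
    calc (2:ℝ) = 2^1 := (pow_one 2).symm
    _ ≤ 2^(k+1) := pow_le_pow_right₀ (by norm_num) (by omega)
  have hpowpos : ∀ k : ℕ, (0:ℝ) < 2^(k+1) := fun k => by positivity
  -- u maps I into I
  have humem : ∀ x ∈ Ico (0:ℝ) 1, (∃ k, x ∈ A k) ∨ (∃ k, x ∈ B k) := by
    intro x hx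
    rcases (hsplit ▸ hx : x ∈ Ico (0:ℝ) (1/2) ∪ Ico (1/2:ℝ) 1) with h | h
    · rw [← hBU] at h; exact Or.inr (Set.mem_iUnion.mp h)
    · rw [← hAU] at h; exact Or.inl (Set.mem_iUnion.mp h)
  have huA_val : ∀ k, ∀ x ∈ A k, u x ∈ Ico (0:ℝ) 1 := by
    intro k x hx
    have hx' := hAsub k hx
    rw [hAf k x hx]
    constructor
    · exact div_nonneg (by linarith [hx'.1]) (le_of_lt (hpowpos k))
    · have := hpow k
      rw [div_lt_one (hpowpos k)]; linarith [hx'.2]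
  have huB_val : ∀ k, ∀ x ∈ B k, u x ∈ Ico (0:ℝ) 1 := by
    intro k x hx
    have hx' := hBsub k hx
    rw [hBf k x hx]
    have h1 : (x - 1)/2^(k+1) < 0 := div_neg_of_neg_of_pos (by linarith [hx'.2]) (hpowpos k)
    have h2 : -1 ≤ (x - 1)/2^(k+1) := by
      rw [le_div_iff₀ (hpowpos k)]
      nlinarith [hpow k, hx'.1]
    constructor <;> [linarith; linarith]
  have humap : Set.MapsTo u (Ico (0:ℝ) 1) (Ico (0:ℝ) 1) := by
    intro x hx
    rcases humem x hx with ⟨k, hk⟩ | ⟨k, hk⟩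
    · exact huA_val k x hk
    · exact huB_val k x hk
  -- u is injective on I
  have huinj : Set.InjOn u (Ico (0:ℝ) 1) := by
    intro x hx y hy hxy
    have hA_lt : ∀ k, ∀ z ∈ A k, u z < 1/2 := by
      intro k z hz
      have hz' := hAsub k hz
      rw [hAf k z hz, div_lt_iff₀ (hpowpos k)]
      nlinarith [hpow2 k, hz'.2]
    have hB_ge : ∀ k, ∀ z ∈ B k, 1/2 ≤ u z := by
      intro k z hz
      have hz' := hBsub k hz
      rw [hBf k z hz]
      have : -(1/2) ≤ (z-1)/2^(k+1) := by
        rw [le_div_iff₀ (hpowpos k)]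
        nlinarith [hpow2 k, hz'.1]
      linarith
    rcases humem x hx with ⟨k, hk⟩ | ⟨k, hk⟩ <;> rcases humem y hy with ⟨j, hj⟩ | ⟨j, hj⟩
    · -- both in A
      have hxk := hAsub k hk; have hyj := hAsub j hj
      rw [hAf k x hk, hAf j y hj] at hxy
      have hkey : x * 2^(j+1) = y * 2^(k+1) := by
        field_simp at hxy; linarith [hxy]
      have hkj : k = j := by
        by_contra hne
        rcases Nat.lt_or_ge k j with h | h
        · have : (2:ℝ)^(j+1) = 2^(k+1) * 2^(j-k) := by
            rw [← pow_add]; congr 1; omega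
          rw [this] at hkey
          have h2 : x * 2^(j-k) = y := by
            have hcan : (x * 2^(j-k)) * 2^(k+1) = (y) * 2^(k+1) := by
              ring_nf; ring_nf at hkey; linarith
            exact mul_right_cancel₀ (ne_of_gt (hpowpos k)) hcan
          have : (2:ℝ) ≤ 2^(j-k) := by
            calc (2:ℝ) = 2^1 := (pow_one 2).symm
            _ ≤ 2^(j-k) := pow_le_pow_right₀ (by norm_num) (by omega)
          nlinarith [hxk.1, hyj.2]
        · have hlt : j < k := by omega
          have : (2:ℝ)^(k+1) = 2^(j+1) * 2^(k-j) := by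
            rw [← pow_add]; congr 1; omega
          rw [this] at hkey
          have h2 : y * 2^(k-j) = x := by
            have hcan : (y * 2^(k-j)) * 2^(j+1) = (x) * 2^(j+1) := by
              ring_nf; ring_nf at hkey; linarith
            exact mul_right_cancel₀ (ne_of_gt (hpowpos j)) hcan
          have : (2:ℝ) ≤ 2^(k-j) := by
            calc (2:ℝ) = 2^1 := (pow_one 2).symm
            _ ≤ 2^(k-j) := pow_le_pow_right₀ (by norm_num) (by omega)
          nlinarith [hyj.1, hxk.2]
      subst hkj
      exact mul_right_cancel₀ (ne_of_gt (hpowpos k)) hkey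
    · exfalso; have h1 := hA_lt k x hk; have h2 := hB_ge j y hj; linarith
    · exfalso; have h1 := hB_ge k x hk; have h2 := hA_lt j y hj; linarith
    · -- both in B
      have hxk := hBsub k hk; have hyj := hBsub j hj
      rw [hBf k x hk, hBf j y hj] at hxy
      have hxy' : (x-1)/2^(k+1) = (y-1)/2^(j+1) := by linarith
      have hkey : (1-x) * 2^(j+1) = (1-y) * 2^(k+1) := by
        field_simp at hxy'; nlinarith [hxy']
      have hkj : k = j := by
        by_contra hne
        rcases Nat.lt_or_ge k j with h | h
        · have : (2:ℝ)^(j+1) = 2^(k+1) * 2^(j-k) := by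
            rw [← pow_add]; congr 1; omega
          rw [this] at hkey
          have h2 : (1-x) * 2^(j-k) = (1-y) := by
            have hcan : ((1-x) * 2^(j-k)) * 2^(k+1) = ((1-y)) * 2^(k+1) := by
              ring_nf; ring_nf at hkey; linarith
            exact mul_right_cancel₀ (ne_of_gt (hpowpos k)) hcan
          have : (2:ℝ) ≤ 2^(j-k) := by
            calc (2:ℝ) = 2^1 := (pow_one 2).symm
            _ ≤ 2^(j-k) := pow_le_pow_right₀ (by norm_num) (by omega)
          nlinarith [hxk.2, hyj.1]
        · have hlt : j < k := by omega
          have : (2:ℝ)^(k+1) = 2^(j+1) * 2^(k-j) := by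
            rw [← pow_add]; congr 1; omega
          rw [this] at hkey
          have h2 : (1-y) * 2^(k-j) = (1-x) := by
            have hcan : ((1-y) * 2^(k-j)) * 2^(j+1) = ((1-x)) * 2^(j+1) := by
              ring_nf; ring_nf at hkey; linarith
            exact mul_right_cancel₀ (ne_of_gt (hpowpos j)) hcan
          have : (2:ℝ) ≤ 2^(k-j) := by
            calc (2:ℝ) = 2^1 := (pow_one 2).symm
            _ ≤ 2^(k-j) := pow_le_pow_right₀ (by norm_num) (by omega)
          nlinarith [hyj.2, hxk.1]
      subst hkj
      have := mul_right_cancel₀ (ne_of_gt (hpowpos k)) hkey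
      linarith
  -- measurability of u restricted to I
  have hum : Measurable ((Ico (0:ℝ) 1).restrict u) := by
    have hcov : ∀ x ∈ Ico (0:ℝ) 1, ∃ i : ℕ ⊕ ℕ, x ∈ Sum.elim A B i := by
      intro x hx
      rcases humem x hx with ⟨k, hk⟩ | ⟨k, hk⟩
      · exact ⟨Sum.inl k, hk⟩
      · exact ⟨Sum.inr k, hk⟩
    have hPm : ∀ i : ℕ ⊕ ℕ, MeasurableSet (Sum.elim A B i) := by
      rintro (k | k)
      · exact hAm k
      · exact hBm k
    have hF : ∀ i : ℕ ⊕ ℕ, Measurable (fun x : ℝ => Sum.elim (fun k => fun x : ℝ => x / 2^(k+1))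
        (fun k => fun x : ℝ => (x-1)/2^(k+1) + 1) i x) := by
      rintro (k | k)
      · exact measurable_id.div_const _
      · exact ((measurable_id.sub_const 1).div_const _).add_const 1
    have heq : ∀ i : ℕ ⊕ ℕ, ∀ x ∈ Sum.elim A B i,
        u x = (fun x : ℝ => Sum.elim (fun k => fun x : ℝ => x / 2^(k+1))
          (fun k => fun x : ℝ => (x-1)/2^(k+1) + 1) i x) x := by
      rintro (k | k) x hx
      · exact hAf k x hx
      · exact hBf k x hx
    exact meas_restrict_of_cover _ hcov hPm _ hF heq
  -- the set S of the SCB construction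
  set D : Set ℝ := Ico (0:ℝ) 1 \ v '' (Ico (0:ℝ) 1) with hD
  set S : Set ℝ := ⋃ k : ℕ, (v ∘ u)^[k] '' D with hS
  have hvIm : MeasurableSet (v '' (Ico (0:ℝ) 1)) :=
    image_meas hvm hvinj measurableSet_Ico Subset.rfl
  have hDm : MeasurableSet D := measurableSet_Ico.diff hvIm
  have hDI : D ⊆ Ico (0:ℝ) 1 := diff_subset
  have hiter : ∀ k : ℕ, MeasurableSet ((v ∘ u)^[k] '' D) ∧ (v ∘ u)^[k] '' D ⊆ Ico (0:ℝ) 1 := by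
    intro k
    induction k with
    | zero => simpa using ⟨hDm, hDI⟩
    | succ n ih =>
      have heq : (v ∘ u)^[n+1] '' D = v '' (u '' ((v ∘ u)^[n] '' D)) := by
        rw [Function.iterate_succ', Set.image_comp (v ∘ u), Set.image_comp v u]
      have husub : u '' ((v ∘ u)^[n] '' D) ⊆ Ico (0:ℝ) 1 := by
        rintro _ ⟨z, hz, rfl⟩; exact humap (ih.2 hz)
      have hum' : MeasurableSet (u '' ((v ∘ u)^[n] '' D)) :=
        image_meas hum huinj ih.1 ih.2
      constructor
      · rw [heq]; exact image_meas hvm hvinj hum' husub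
      · rw [heq]; rintro _ ⟨z, hz, rfl⟩; exact hvmap (husub hz)
  have hSm : MeasurableSet S := MeasurableSet.iUnion fun k => (hiter k).1
  have hSsub : S ⊆ Ico (0:ℝ) 1 := iUnion_subset fun k => (hiter k).2
  have hvuS : ∀ x ∈ S, v (u x) ∈ S := by
    intro x hx
    rw [hS, mem_iUnion] at hx ⊢
    obtain ⟨k, hk⟩ := hx
    exact ⟨k + 1, by rw [Function.iterate_succ', Set.image_comp]; exact ⟨x, hk, rfl⟩⟩
  have hInotS : ∀ x ∈ Ico (0:ℝ) 1, x ∉ S → x ∈ v '' (Ico (0:ℝ) 1) := by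
    intro x hx hxS
    by_contra h
    exact hxS (mem_iUnion.mpr ⟨0, by simpa using ⟨hx, h⟩⟩)
  -- evaluation of scbOn
  have hscbS : ∀ x ∈ S, scbOn u v x = u x := by
    intro x hx
    rw [scbOn, if_pos (hS ▸ hx)]
  have hscbNS : ∀ x, x ∉ S → scbOn u v x =
      Function.invFunOn v (Ico (0:ℝ) 1) x := by
    intro x hx
    rw [scbOn, if_neg (hS ▸ hx)]
  -- the bijection
  have hbij : Set.BijOn (scbOn u v) (Ico (0:ℝ) 1) (Ico (0:ℝ) 1) := by
    refine ⟨?_, ?_, ?_⟩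
    · intro x hx
      by_cases hxS : x ∈ S
      · rw [hscbS x hxS]; exact humap hx
      · rw [hscbNS x hxS]
        obtain ⟨y, hy, hvy⟩ := hInotS x hx hxS
        exact Function.invFunOn_mem ⟨y, hy, hvy⟩
    · intro x hx y hy hxy
      by_cases hxS : x ∈ S <;> by_cases hyS : y ∈ S
      · rw [hscbS x hxS, hscbS y hyS] at hxy
        exact huinj hx hy hxy
      · exfalso
        rw [hscbS x hxS, hscbNS y hyS] at hxy
        obtain ⟨z, hz, hvz⟩ := hInotS y hy hyS
        have h1 : v (Function.invFunOn v (Ico (0:ℝ) 1) y) = y :=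
          Function.invFunOn_eq ⟨z, hz, hvz⟩
        have : v (u x) = y := by rw [hxy]; exact h1
        exact hyS (this ▸ hvuS x hxS)
      · exfalso
        rw [hscbNS x hxS, hscbS y hyS] at hxy
        obtain ⟨z, hz, hvz⟩ := hInotS x hx hxS
        have h1 : v (Function.invFunOn v (Ico (0:ℝ) 1) x) = x :=
          Function.invFunOn_eq ⟨z, hz, hvz⟩
        have : v (u y) = x := by rw [← hxy]; exact h1
        exact hxS (this ▸ hvuS y hyS)
      · rw [hscbNS x hxS, hscbNS y hyS] at hxy
        obtain ⟨z, hz, hvz⟩ := hInotS x hx hxS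
        obtain ⟨w, hw, hvw⟩ := hInotS y hy hyS
        have h1 : v (Function.invFunOn v (Ico (0:ℝ) 1) x) = x :=
          Function.invFunOn_eq ⟨z, hz, hvz⟩
        have h2 : v (Function.invFunOn v (Ico (0:ℝ) 1) y) = y :=
          Function.invFunOn_eq ⟨w, hw, hvw⟩
        rw [← h1, ← h2, hxy]
    · intro y hy
      by_cases hvyS : v y ∈ S
      · rw [hS, mem_iUnion] at hvyS
        obtain ⟨k, hk⟩ := hvyS
        match k, hk with
        | 0, hk =>
          exfalso
          simp only [Function.iterate_zero, Set.image_id] at hk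
          exact hk.2 ⟨y, hy, rfl⟩
        | n+1, hk =>
          rw [Function.iterate_succ', Set.image_comp] at hk
          obtain ⟨w, hw, hvw⟩ := hk
          have hwS : w ∈ S := mem_iUnion.mpr ⟨n, hw⟩
          have hwI : w ∈ Ico (0:ℝ) 1 := hSsub hwS
          have huw : u w ∈ Ico (0:ℝ) 1 := humap hwI
          have : y = u w := hvinj hy huw hvw.symm
          exact ⟨w, hwI, by rw [hscbS w hwS, this]⟩
      · refine ⟨v y, hvmap hy, ?_⟩
        rw [hscbNS (v y) hvyS]
        exact hvinj.leftInvOn_invFunOn hy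
  -- partition pieces for the inverse branch
  set e : ℕ ≃ ℕ × ℕ := (Denumerable.eqv (ℕ × ℕ)).symm with he
  set U : ℕ → ℕ → Set ℝ := fun k l =>
    Subtype.val '' {y : (Ico (0:ℝ) 1) | v ↑y = ((y:ℝ) + (l:ℝ))/2^k} with hU
  have hUm : ∀ k l, MeasurableSet (U k l) := by
    intro k l
    apply MeasurableSet.subtype_image measurableSet_Ico
    exact measurableSet_eq_fun hvm ((measurable_subtype_coe.add_const _).div_const _)
  have hUsub : ∀ k l, U k l ⊆ Ico (0:ℝ) 1 := by
    rintro k l _ ⟨y, hy, rfl⟩; exact y.2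
  have hUval : ∀ k l, ∀ x ∈ U k l, v x = (x + (l:ℝ))/2^k := by
    rintro k l _ ⟨y, hy, rfl⟩; exact hy
  have hUcov : ∀ y ∈ Ico (0:ℝ) 1, ∃ k l, y ∈ U k l := by
    intro y hy
    obtain ⟨k, l, hf⟩ := hvform y hy
    exact ⟨k, l, ⟨⟨y, hy⟩, hf, rfl⟩⟩
  set T : ℕ → Set ℝ := fun n =>
    U (e n).1 (e n).2 \ ⋃ m, ⋃ (_ : m < n), U (e m).1 (e m).2 with hT
  have hTm : ∀ n, MeasurableSet (T n) := fun n =>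
    (hUm _ _).diff (MeasurableSet.iUnion fun m => MeasurableSet.iUnion fun _ => hUm _ _)
  have hTsub : ∀ n, T n ⊆ U (e n).1 (e n).2 := fun n => diff_subset
  have hTI : ∀ n, T n ⊆ Ico (0:ℝ) 1 := fun n => (hTsub n).trans (hUsub _ _)
  have hTdisj : Pairwise (Function.onFun Disjoint T) := by
    intro m n hmn
    have key : ∀ a b : ℕ, a < b → Disjoint (T a) (T b) := by
      intro a b hab
      rw [Set.disjoint_left]
      intro x hxa hxb
      exact hxb.2 (mem_iUnion.mpr ⟨a, mem_iUnion.mpr ⟨hab, hxa.1⟩⟩)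
    rcases lt_or_gt_of_ne hmn with h | h
    · exact key m n h
    · exact (key n m h).symm
  have hTcov : ∀ y ∈ Ico (0:ℝ) 1, ∃ n, y ∈ T n := by
    intro y hy
    obtain ⟨k, l, hkl⟩ := hUcov y hy
    have hex : ∃ n, y ∈ U (e n).1 (e n).2 := by
      refine ⟨e.symm (k, l), ?_⟩
      rw [Equiv.apply_symm_apply]
      exact hkl
    refine ⟨Nat.find hex, Nat.find_spec hex, ?_⟩
    intro hmem
    rw [mem_iUnion] at hmem
    obtain ⟨m, hm⟩ := hmem
    rw [mem_iUnion] at hm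
    obtain ⟨hlt, hmU⟩ := hm
    exact absurd hmU (Nat.find_min hex hlt)
  set C : ℕ → Set ℝ := fun n => v '' T n \ S with hC
  have hCm : ∀ n, MeasurableSet (C n) := fun n =>
    (image_meas hvm hvinj (hTm n) (hTI n)).diff hSm
  have hCsub : ∀ n, C n ⊆ Ico (0:ℝ) 1 \ S := by
    rintro n x ⟨⟨y, hy, rfl⟩, hxS⟩
    exact ⟨hvmap (hTI n hy), hxS⟩
  have hCdisj : Pairwise (Function.onFun Disjoint C) := by
    intro m n hmn
    rw [Function.onFun, Set.disjoint_left]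
    rintro x ⟨⟨y, hy, rfl⟩, _⟩ ⟨⟨z, hz, hvz⟩, _⟩
    have : z = y := hvinj (hTI n hz) (hTI m hy) hvz
    subst this
    exact Set.disjoint_left.mp (hTdisj hmn) hy hz
  have hCcov : ∀ x ∈ Ico (0:ℝ) 1, x ∉ S → ∃ n, x ∈ C n := by
    intro x hx hxS
    obtain ⟨y, hy, rfl⟩ := hInotS x hx hxS
    obtain ⟨n, hn⟩ := hTcov y hy
    exact ⟨n, ⟨y, hn, rfl⟩, hxS⟩
  have hCval : ∀ n, ∀ x ∈ C n,
      scbOn u v x = (2:ℝ)^((e n).1) * x - ((e n).2 : ℝ) ∧ scbOn u v x ∈ Ico (0:ℝ) 1 := by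
    rintro n x ⟨⟨y, hyT, rfl⟩, hxS⟩
    have hyI : y ∈ Ico (0:ℝ) 1 := hTI n hyT
    have h1 : scbOn u v (v y) = y := by
      rw [hscbNS _ hxS]
      exact hvinj.leftInvOn_invFunOn hyI
    have hval := hUval _ _ y (hTsub n hyT)
    have hpos : (0:ℝ) < 2^((e n).1) := by positivity
    refine ⟨?_, by rw [h1]; exact hyI⟩
    rw [h1, hval]
    field_simp
    ring
  -- the value of scbOn on the union of C-pieces with given exponent
  have hCU_val : ∀ m : ℤ, 0 ≤ m → ∀ x ∈ (⋃ n ∈ {n : ℕ | ((e n).1 : ℤ) = m}, C n),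
      scbOn u v x = Int.fract ((2:ℝ)^m * x) := by
    intro m hm x hx
    rw [mem_iUnion₂] at hx
    obtain ⟨n, hn, hxn⟩ := hx
    obtain ⟨hval, hmem⟩ := hCval n x hxn
    have h2 : (2:ℝ)^m = (2:ℝ)^((e n).1) := by
      rw [← hn, zpow_natCast]
    have hbound : (2:ℝ)^((e n).1) * x - ((e n).2:ℝ) ∈ Ico (0:ℝ) 1 := hval ▸ hmem
    have hfr : Int.fract ((2:ℝ)^((e n).1) * x) = 2^((e n).1) * x - ((e n).2:ℝ) := by
      rw [show (2:ℝ)^((e n).1) * x = (2^((e n).1) * x - ((e n).2:ℝ)) + ((e n).2:ℕ) by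
        push_cast; ring, Int.fract_add_natCast,
        Int.fract_eq_self.mpr ⟨hbound.1, hbound.2⟩]
      ring
    rw [hval, h2, hfr]
  -- the final partitions
  set A' : ℤ → Set ℝ := fun m =>
    if 0 ≤ m then (⋃ n ∈ {n : ℕ | ((e n).1 : ℤ) = m}, C n) ∩ Ico (1/2:ℝ) 1
    else A (-m-1).toNat ∩ S with hA'def
  set B' : ℤ → Set ℝ := fun m =>
    if 0 ≤ m then (⋃ n ∈ {n : ℕ | ((e n).1 : ℤ) = m}, C n) ∩ Ico (0:ℝ) (1/2)
    else B (-m-1).toNat ∩ S with hB'def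
  have hCUm : ∀ m : ℤ, MeasurableSet (⋃ n ∈ {n : ℕ | ((e n).1 : ℤ) = m}, C n) :=
    fun m => MeasurableSet.biUnion (to_countable _) fun n _ => hCm n
  have hA'm : ∀ m, MeasurableSet (A' m) := by
    intro m
    simp only [hA'def]
    split_ifs
    · exact (hCUm m).inter measurableSet_Ico
    · exact (hAm _).inter hSm
  have hB'm : ∀ m, MeasurableSet (B' m) := by
    intro m
    simp only [hB'def]
    split_ifs
    · exact (hCUm m).inter measurableSet_Ico
    · exact (hBm _).inter hSm
  have hA'U : (⋃ m, A' m) = Ico (1/2:ℝ) 1 := by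
    apply Subset.antisymm
    · rintro x hx
      rw [mem_iUnion] at hx
      obtain ⟨m, hm⟩ := hx
      simp only [hA'def] at hm
      split_ifs at hm with h
      · exact hm.2
      · exact hAsub _ hm.1
    · intro x hx
      have hxI : x ∈ Ico (0:ℝ) 1 := ⟨by linarith [hx.1], hx.2⟩
      by_cases hxS : x ∈ S
      · have hxA : x ∈ ⋃ k, A k := hAU ▸ hx
        rw [mem_iUnion] at hxA
        obtain ⟨k, hk⟩ := hxA
        refine mem_iUnion.mpr ⟨-((k:ℤ)+1), ?_⟩
        simp only [hA'def]
        rw [if_neg (by omega)]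
        have hkk : (-(-((k:ℤ)+1))-1).toNat = k := by omega
        rw [hkk]
        exact ⟨hk, hxS⟩
      · obtain ⟨n, hn⟩ := hCcov x hxI hxS
        refine mem_iUnion.mpr ⟨((e n).1 : ℤ), ?_⟩
        simp only [hA'def]
        rw [if_pos (Int.natCast_nonneg _)]
        exact ⟨mem_iUnion₂.mpr ⟨n, rfl, hn⟩, hx⟩
  have hB'U : (⋃ m, B' m) = Ico (0:ℝ) (1/2) := by
    apply Subset.antisymm
    · rintro x hx
      rw [mem_iUnion] at hx
      obtain ⟨m, hm⟩ := hx
      simp only [hB'def] at hm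
      split_ifs at hm with h
      · exact hm.2
      · exact hBsub _ hm.1
    · intro x hx
      have hxI : x ∈ Ico (0:ℝ) 1 := ⟨hx.1, by linarith [hx.2]⟩
      by_cases hxS : x ∈ S
      · have hxB : x ∈ ⋃ k, B k := hBU ▸ hx
        rw [mem_iUnion] at hxB
        obtain ⟨k, hk⟩ := hxB
        refine mem_iUnion.mpr ⟨-((k:ℤ)+1), ?_⟩
        simp only [hB'def]
        rw [if_neg (by omega)]
        have hkk : (-(-((k:ℤ)+1))-1).toNat = k := by omega
        rw [hkk]
        exact ⟨hk, hxS⟩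
      · obtain ⟨n, hn⟩ := hCcov x hxI hxS
        refine mem_iUnion.mpr ⟨((e n).1 : ℤ), ?_⟩
        simp only [hB'def]
        rw [if_pos (Int.natCast_nonneg _)]
        exact ⟨mem_iUnion₂.mpr ⟨n, rfl, hn⟩, hx⟩
  have hA'd : Pairwise (Function.onFun Disjoint A') := by
    intro m m' hne
    rw [Function.onFun]
    simp only [hA'def]
    by_cases h1 : 0 ≤ m <;> by_cases h2 : 0 ≤ m'
    · rw [if_pos h1, if_pos h2, Set.disjoint_left]
      rintro x ⟨hx1, _⟩ ⟨hx2, _⟩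
      rw [mem_iUnion₂] at hx1 hx2
      obtain ⟨n, hn, hxn⟩ := hx1
      obtain ⟨n', hn', hxn'⟩ := hx2
      have hnn' : n ≠ n' := fun h => hne (by rw [← hn, ← hn', h])
      exact Set.disjoint_left.mp (hCdisj hnn') hxn hxn'
    · rw [if_pos h1, if_neg h2, Set.disjoint_left]
      rintro x ⟨hx1, _⟩ ⟨_, hxS⟩
      rw [mem_iUnion₂] at hx1
      obtain ⟨n, _, hxn⟩ := hx1
      exact (hCsub n hxn).2 hxS
    · rw [if_neg h1, if_pos h2, Set.disjoint_left]
      rintro x ⟨_, hxS⟩ ⟨hx2, _⟩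
      rw [mem_iUnion₂] at hx2
      obtain ⟨n, _, hxn⟩ := hx2
      exact (hCsub n hxn).2 hxS
    · rw [if_neg h1, if_neg h2, Set.disjoint_left]
      rintro x ⟨hxa, _⟩ ⟨hxa', _⟩
      have hk : (-m-1).toNat ≠ (-m'-1).toNat := by omega
      exact Set.disjoint_left.mp (hAd hk) hxa hxa'
  have hB'd : Pairwise (Function.onFun Disjoint B') := by
    intro m m' hne
    rw [Function.onFun]
    simp only [hB'def]
    by_cases h1 : 0 ≤ m <;> by_cases h2 : 0 ≤ m'
    · rw [if_pos h1, if_pos h2, Set.disjoint_left]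
      rintro x ⟨hx1, _⟩ ⟨hx2, _⟩
      rw [mem_iUnion₂] at hx1 hx2
      obtain ⟨n, hn, hxn⟩ := hx1
      obtain ⟨n', hn', hxn'⟩ := hx2
      have hnn' : n ≠ n' := fun h => hne (by rw [← hn, ← hn', h])
      exact Set.disjoint_left.mp (hCdisj hnn') hxn hxn'
    · rw [if_pos h1, if_neg h2, Set.disjoint_left]
      rintro x ⟨hx1, _⟩ ⟨_, hxS⟩
      rw [mem_iUnion₂] at hx1
      obtain ⟨n, _, hxn⟩ := hx1
      exact (hCsub n hxn).2 hxS
    · rw [if_neg h1, if_pos h2, Set.disjoint_left]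
      rintro x ⟨_, hxS⟩ ⟨hx2, _⟩
      rw [mem_iUnion₂] at hx2
      obtain ⟨n, _, hxn⟩ := hx2
      exact (hCsub n hxn).2 hxS
    · rw [if_neg h1, if_neg h2, Set.disjoint_left]
      rintro x ⟨hxb, _⟩ ⟨hxb', _⟩
      have hk : (-m-1).toNat ≠ (-m'-1).toNat := by omega
      exact Set.disjoint_left.mp (hBd hk) hxb hxb'
  have hnegpow : ∀ m : ℤ, ¬ 0 ≤ m → ∀ y : ℝ,
      (2:ℝ)^m * y = y / 2^((-m-1).toNat + 1) := by
    intro m hm y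
    have hmk : (2:ℝ)^m = ((2:ℝ)^((-m-1).toNat + 1))⁻¹ := by
      rw [← zpow_natCast (2:ℝ) ((-m-1).toNat + 1), ← zpow_neg]
      congr 1
      push_cast
      omega
    rw [hmk, inv_mul_eq_div]
  have hA'f : ∀ m : ℤ, ∀ x ∈ A' m, scbOn u v x = Int.fract ((2:ℝ)^m * x) := by
    intro m x hx
    simp only [hA'def] at hx
    split_ifs at hx with h
    · exact hCU_val m h x hx.1
    · obtain ⟨hxa, hxS⟩ := hx
      have hxk := hAsub _ hxa
      rw [hscbS x hxS, hAf _ x hxa, hnegpow m h x]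
      rw [Int.fract_eq_self.mpr ⟨?_, ?_⟩]
      · exact div_nonneg (by linarith [hxk.1]) (le_of_lt (hpowpos _))
      · rw [div_lt_one (hpowpos _)]
        linarith [hpow ((-m-1).toNat), hxk.2]
  have hB'f : ∀ m : ℤ, ∀ x ∈ B' m, scbOn u v x = Int.fract ((2:ℝ)^m * (x - 1)) := by
    intro m x hx
    simp only [hB'def] at hx
    split_ifs at hx with h
    · have hres := hCU_val m h x hx.1
      lift m to ℕ using h with mn
      have heq2 : (2:ℝ)^(mn:ℤ) * (x-1) = (2:ℝ)^(mn:ℤ) * x - (((2^mn : ℤ)) : ℝ) := by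
        rw [zpow_natCast]
        push_cast
        ring
      rw [heq2, Int.fract_sub_intCast]
      exact hres
    · obtain ⟨hxb, hxS⟩ := hx
      have hxk := hBsub _ hxb
      rw [hscbS x hxS, hBf _ x hxb, hnegpow m h (x-1)]
      set t : ℝ := (x - 1) / 2^((-m-1).toNat + 1) with ht
      have htneg : t < 0 := div_neg_of_neg_of_pos (by linarith [hxk.2]) (hpowpos _)
      have htge : -1 ≤ t := by
        rw [ht, le_div_iff₀ (hpowpos _)]
        nlinarith [hpow ((-m-1).toNat), hxk.1]
      have hfloor : ⌊t⌋ = -1 := by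
        rw [Int.floor_eq_iff]
        constructor
        · push_cast; linarith
        · push_cast; linarith
      rw [show Int.fract t = t - (⌊t⌋ : ℝ) from rfl, hfloor]
      push_cast
      ring
  -- assemble
  refine ⟨hbij, ?_, A', B', hA'm, hB'm, hA'U, hA'd, hB'U, hB'd, hA'f, hB'f⟩
  have hcov : ∀ x ∈ Ico (0:ℝ) 1, ∃ i : ℤ ⊕ ℤ, x ∈ Sum.elim A' B' i := by
    intro x hx
    rcases (hsplit ▸ hx : x ∈ Ico (0:ℝ) (1/2) ∪ Ico (1/2:ℝ) 1) with h | h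
    · rw [← hB'U] at h
      obtain ⟨m, hm⟩ := mem_iUnion.mp h
      exact ⟨Sum.inr m, hm⟩
    · rw [← hA'U] at h
      obtain ⟨m, hm⟩ := mem_iUnion.mp h
      exact ⟨Sum.inl m, hm⟩
  have hPm : ∀ i : ℤ ⊕ ℤ, MeasurableSet (Sum.elim A' B' i) := by
    rintro (m | m)
    · exact hA'm m
    · exact hB'm m
  have hF : ∀ i : ℤ ⊕ ℤ, Measurable (fun x : ℝ => Sum.elim
      (fun m => fun x : ℝ => Int.fract ((2:ℝ)^m * x))
      (fun m => fun x : ℝ => Int.fract ((2:ℝ)^m * (x - 1))) i x) := by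
    rintro (m | m)
    · exact (measurable_const.mul measurable_id).fract
    · exact (measurable_const.mul (measurable_id.sub_const 1)).fract
  have heq : ∀ i : ℤ ⊕ ℤ, ∀ x ∈ Sum.elim A' B' i,
      scbOn u v x = (fun x : ℝ => Sum.elim
        (fun m => fun x : ℝ => Int.fract ((2:ℝ)^m * x))
        (fun m => fun x : ℝ => Int.fract ((2:ℝ)^m * (x - 1))) i x) x := by
    rintro (m | m) x hx
    · exact hA'f m x hx
    · exact hB'f m x hx
  exact meas_restrict_of_cover _ hcov hPm _ hF heq

end
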